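/- Let ζ_m ~ Gamma(m,1/m) and let φ:(0,∞)→ℝ be twice continuously differentiable with all relevant moments finite. Then σ²_{φ,m} = [m Var(ζ_m φ'(ζ_m)) + (2m+1) μ²_{φ,m} - 2m μ_{φ,m} E(ζ_m² φ'(ζ_m))] / [E(ζ_m² φ''(ζ_m))]² ≥ 1, where μ_{φ,m} = E(ζ_m φ'(ζ_m)), provided E(ζ_m² φ''(ζ_m)) ≠ 0. -/

import Mathlib

open MeasureTheory ProbabilityTheory Real Set
open scoped ENNReal NNReal

lemma myexp_integral (g : ℝ → ℝ) :
    ∫ x in Ioi (0:ℝ), g x = ∫ t : ℝ, Real.exp t * g (Real.exp t) := by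
  have h := integral_image_eq_integral_abs_deriv_smul (s := (univ : Set ℝ)) (f := Real.exp)
    (f' := Real.exp) MeasurableSet.univ
    (fun x _ => (Real.hasDerivAt_exp x).hasDerivWithinAt) Real.exp_injective.injOn g
  simpa [Set.image_univ, Real.range_exp, abs_of_pos (Real.exp_pos _), smul_eq_mul] using h

lemma myexp_integrable (g : ℝ → ℝ) :
    IntegrableOn g (Ioi (0:ℝ)) ↔ Integrable (fun t => Real.exp t * g (Real.exp t)) := by
  have h := integrableOn_image_iff_integrableOn_abs_deriv_smul (s := (univ : Set ℝ))
    (f := Real.exp) (f' := Real.exp) MeasurableSet.univ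
    (fun x _ => (Real.hasDerivAt_exp x).hasDerivWithinAt) Real.exp_injective.injOn g
  simpa [Set.image_univ, Real.range_exp, abs_of_pos (Real.exp_pos _), smul_eq_mul,
    integrableOn_univ] using h

lemma my_integral_deriv_zero (u u' : ℝ → ℝ)
    (hd : ∀ x ∈ Ioi (0:ℝ), HasDerivAt u (u' x) x)
    (hu' : IntegrableOn u' (Ioi 0))
    (hu : IntegrableOn (fun x => u x / x) (Ioi 0)) :
    ∫ x in Ioi (0:ℝ), u' x = 0 := by
  have hU : ∀ t : ℝ, HasDerivAt (fun t => u (Real.exp t)) (Real.exp t * u' (Real.exp t)) t := by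
    intro t
    have := (hd _ (mem_Ioi.2 (Real.exp_pos t))).comp t (Real.hasDerivAt_exp t)
    rw [mul_comm]; exact this
  have hi' : Integrable (fun t => Real.exp t * u' (Real.exp t)) := (myexp_integrable u').mp hu'
  have hi : Integrable (fun t => u (Real.exp t)) := by
    have := (myexp_integrable (fun x => u x / x)).mp hu
    refine this.congr (Filter.Eventually.of_forall fun t => ?_)
    field_simp
  have h0 := integral_eq_zero_of_hasDerivAt_of_integrable hU hi' hi
  rw [myexp_integral]; exact h0

lemma my_ae_ne_zero : ∀ᵐ x : ℝ, x ≠ 0 := by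
  have : (volume ({0} : Set ℝ)) = 0 := Real.volume_singleton
  rw [ae_iff]
  simpa [Set.setOf_eq_eq_singleton'] using this

lemma my_smul_eq (a r : ℝ) (ha : 0 < a) (hr : 0 < r) (g : ℝ → ℝ) :
    (fun x => Real.toNNReal (gammaPDFReal a r x) • g x)
      =ᵐ[volume] (Ioi (0:ℝ)).indicator (fun x => g x * gammaPDFReal a r x) := by
  filter_upwards [my_ae_ne_zero] with x hx
  rcases lt_or_gt_of_ne hx with h | h
  · simp [Set.indicator_of_notMem (by simpa using h.le : x ∉ Ioi (0:ℝ)),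
      gammaPDFReal, if_neg (not_le.2 h)]
  · rw [Set.indicator_of_mem (mem_Ioi.2 h)]
    rw [NNReal.smul_def, Real.coe_toNNReal _ (gammaPDFReal_nonneg ha hr x), smul_eq_mul, mul_comm]

lemma my_withDensity (a r : ℝ) :
    gammaMeasure a r
      = volume.withDensity (fun x => ((Real.toNNReal (gammaPDFReal a r x) : ℝ≥0) : ℝ≥0∞)) := rfl

lemma my_integral_gamma (a r : ℝ) (ha : 0 < a) (hr : 0 < r) (g : ℝ → ℝ) :
    ∫ x, g x ∂(gammaMeasure a r) = ∫ x in Ioi 0, g x * gammaPDFReal a r x := by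
  rw [my_withDensity,
    integral_withDensity_eq_integral_smul (measurable_gammaPDFReal a r).real_toNNReal g,
    integral_congr_ae (my_smul_eq a r ha hr g), integral_indicator measurableSet_Ioi]

lemma my_integrable_gamma_iff (a r : ℝ) (ha : 0 < a) (hr : 0 < r) (g : ℝ → ℝ) :
    Integrable g (gammaMeasure a r) ↔
      IntegrableOn (fun x => g x * gammaPDFReal a r x) (Ioi 0) := by
  rw [my_withDensity,
    integrable_withDensity_iff_integrable_smul (measurable_gammaPDFReal a r).real_toNNReal,
    integrable_congr (my_smul_eq a r ha hr g), integrable_indicator_iff measurableSet_Ioi]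

lemma my_rpow_integrable (a r p : ℝ) (ha : 0 < a) (hr : 0 < r) (hp : 0 ≤ p) :
    IntegrableOn (fun x => x ^ p * gammaPDFReal a r x) (Ioi (0:ℝ)) := by
  have base : IntegrableOn (fun x : ℝ => x ^ (a + p - 1) * Real.exp (-r * x)) (Ioi 0) := by
    have := integrableOn_rpow_mul_exp_neg_mul_rpow (p := 1) (s := a + p - 1) (b := r)
      (by linarith) zero_lt_one hr
    simpa using this
  have : IntegrableOn (fun x : ℝ => r ^ a / Real.Gamma a * (x ^ (a + p - 1) * Real.exp (-r * x)))
      (Ioi 0) := base.const_mul _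
  refine this.congr_fun (fun x hx => ?_) measurableSet_Ioi
  have hx : (0:ℝ) < x := hx
  rw [gammaPDFReal, if_pos hx.le]
  dsimp only
  rw [show a + p - 1 = p + (a - 1) by ring, Real.rpow_add hx, neg_mul]
  ring

lemma my_rpow_integral (a r p : ℝ) (ha : 0 < a) (hr : 0 < r) (hp : 0 ≤ p) :
    ∫ x in Ioi (0:ℝ), x ^ p * gammaPDFReal a r x
      = Real.Gamma (a + p) / (Real.Gamma a * r ^ p) := by
  have congr1 : ∫ x in Ioi (0:ℝ), x ^ p * gammaPDFReal a r x
      = ∫ x in Ioi (0:ℝ), r ^ a / Real.Gamma a * (x ^ (a + p - 1) * Real.exp (-(r * x))) := by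
    refine setIntegral_congr_fun measurableSet_Ioi (fun x hx => ?_)
    have hx : (0:ℝ) < x := hx
    rw [gammaPDFReal, if_pos hx.le, show a + p - 1 = p + (a - 1) by ring, Real.rpow_add hx]
    ring
  rw [congr1, integral_const_mul, integral_rpow_mul_exp_neg_mul_Ioi (by linarith) hr]
  rw [div_rpow (by norm_num) hr.le, one_rpow, Real.rpow_add hr]
  have hG : Real.Gamma a ≠ 0 := (Real.Gamma_pos_of_pos ha).ne'
  have h1 : r ^ a ≠ 0 := (Real.rpow_pos_of_pos hr a).ne'
  have h2 : r ^ p ≠ 0 := (Real.rpow_pos_of_pos hr p).ne'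
  field_simp

lemma my_rpow_two (x : ℝ) : x ^ (2:ℝ) = x ^ 2 := by
  rw [show (2:ℝ) = ((2:ℕ):ℝ) by norm_num, Real.rpow_natCast]

section Moments
variable {a r : ℝ}

lemma my_integrable_id (ha : 0 < a) (hr : 0 < r) : Integrable (fun x : ℝ => x) (gammaMeasure a r) := by
  rw [my_integrable_gamma_iff a r ha hr]
  have := my_rpow_integrable a r 1 ha hr zero_le_one
  simpa using this

lemma my_integrable_sq (ha : 0 < a) (hr : 0 < r) : Integrable (fun x : ℝ => x ^ 2) (gammaMeasure a r) := by
  rw [my_integrable_gamma_iff a r ha hr]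
  have := my_rpow_integrable a r 2 ha hr (by norm_num)
  refine this.congr_fun (fun x _ => ?_) measurableSet_Ioi
  simp [my_rpow_two]

lemma my_integral_id (ha : 0 < a) (hr : 0 < r) : ∫ x, x ∂(gammaMeasure a r) = a / r := by
  rw [my_integral_gamma a r ha hr]
  have h := my_rpow_integral a r 1 ha hr zero_le_one
  simp only [Real.rpow_one] at h
  rw [h, Real.Gamma_add_one ha.ne']
  field_simp [(Real.Gamma_pos_of_pos ha).ne']

lemma my_integral_sq (ha : 0 < a) (hr : 0 < r) : ∫ x, x ^ 2 ∂(gammaMeasure a r) = (a + 1) * a / r ^ 2 := by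
  rw [my_integral_gamma a r ha hr]
  have h := my_rpow_integral a r 2 ha hr (by norm_num)
  have e : ∫ x in Ioi (0:ℝ), x ^ 2 * gammaPDFReal a r x
      = ∫ x in Ioi (0:ℝ), x ^ (2:ℝ) * gammaPDFReal a r x := by
    refine integral_congr_ae (Filter.Eventually.of_forall fun x => ?_)
    simp [my_rpow_two]
  rw [e, h, show a + 2 = (a + 1) + 1 by ring, Real.Gamma_add_one (by linarith),
    Real.Gamma_add_one ha.ne', my_rpow_two]
  field_simp [(Real.Gamma_pos_of_pos ha).ne']

end Moments

/-- For `ζ_m ~ Gamma(m, 1/m)` (rate `m`) and twice continuously differentiable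
`φ : (0,∞) → ℝ` with all the relevant moments finite and `E(ζ²φ''(ζ)) ≠ 0`, the
asymptotic variance factor
`σ²_{φ,m} = [m Var(ζφ'(ζ)) + (2m+1) μ² - 2m μ E(ζ²φ'(ζ))] / [E(ζ²φ''(ζ))]²`
(with `μ = E(ζφ'(ζ))`) is at least 1. -/
theorem sigma_sq_ge_one
    (m : ℕ) (hm : 0 < m) (φ : ℝ → ℝ)
    (hφ : ContDiffOn ℝ 2 φ (Set.Ioi 0))
    (h1 : MemLp (fun x => x * deriv φ x) 2 (gammaMeasure m m))
    (h2 : Integrable (fun x => x ^ 2 * deriv φ x) (gammaMeasure m m))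
    (h3 : Integrable (fun x => x ^ 2 * deriv (deriv φ) x) (gammaMeasure m m))
    (hne : (∫ x, x ^ 2 * deriv (deriv φ) x ∂(gammaMeasure m m)) ≠ 0) :
    1 ≤ ((m : ℝ) * variance (fun x => x * deriv φ x) (gammaMeasure m m)
        + (2 * (m : ℝ) + 1) * (∫ x, x * deriv φ x ∂(gammaMeasure m m)) ^ 2
        - 2 * (m : ℝ) * (∫ x, x * deriv φ x ∂(gammaMeasure m m))
            * (∫ x, x ^ 2 * deriv φ x ∂(gammaMeasure m m)))
      / (∫ x, x ^ 2 * deriv (deriv φ) x ∂(gammaMeasure m m)) ^ 2 := by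
  have ha : (0:ℝ) < (m:ℝ) := by exact_mod_cast hm
  set ν := gammaMeasure (m:ℝ) (m:ℝ) with hν
  haveI : IsProbabilityMeasure ν := isProbabilityMeasure_gammaMeasure ha ha
  set μI := ∫ x, x * deriv φ x ∂ν with hμI
  set A := ∫ x, x ^ 2 * deriv φ x ∂ν with hA
  set D := ∫ x, x ^ 2 * deriv (deriv φ) x ∂ν with hD
  -- derivative facts
  have hφ1 : ∀ x ∈ Ioi (0:ℝ), HasDerivAt φ (deriv φ x) x := fun x hx =>
    ((hφ.differentiableOn two_ne_zero).differentiableAt (isOpen_Ioi.mem_nhds hx)).hasDerivAt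
  have hφd : ContDiffOn ℝ 1 (deriv φ) (Ioi 0) :=
    hφ.deriv_of_isOpen isOpen_Ioi (by norm_num)
  have hφ2 : ∀ x ∈ Ioi (0:ℝ), HasDerivAt (deriv φ) (deriv (deriv φ) x) x := fun x hx =>
    ((hφd.differentiableOn one_ne_zero).differentiableAt (isOpen_Ioi.mem_nhds hx)).hasDerivAt
  -- basic integrabilities
  have ig : Integrable (fun x => x * deriv φ x) ν := h1.integrable one_le_two
  have ig2 : Integrable (fun x => (x * deriv φ x) ^ 2) ν := h1.integrable_sq
  have ix : Integrable (fun x : ℝ => x) ν := my_integrable_id ha ha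
  have ix2 : Integrable (fun x : ℝ => x ^ 2) ν := my_integrable_sq ha ha
  have iX : ∫ x, x ∂ν = 1 := by rw [my_integral_id ha ha, div_self ha.ne']
  have iX2 : ∫ x, x ^ 2 ∂ν = ((m:ℝ) + 1) / m := by
    rw [my_integral_sq ha ha]; field_simp
  have ixg : Integrable (fun x => x * (x * deriv φ x)) ν := by
    have e : (fun x : ℝ => x * (x * deriv φ x)) = fun x => x ^ 2 * deriv φ x := by
      funext x; ring
    rw [e]; exact h2
  -- IBP step
  set C := (m:ℝ) ^ (m:ℝ) / Real.Gamma m with hC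
  set p := fun x : ℝ => C * (x ^ ((m:ℝ) - 1) * Real.exp (-((m:ℝ) * x))) with hp
  have hpdf : ∀ x : ℝ, 0 < x → gammaPDFReal m m x = p x := by
    intro x hx
    rw [hp, gammaPDFReal, if_pos hx.le, hC, mul_assoc]
  set u := fun x : ℝ => x ^ 2 * deriv φ x * p x with hu
  set u' := fun x : ℝ => (x ^ 2 * deriv (deriv φ) x + ((m:ℝ) + 1) * (x * deriv φ x)
      - (m:ℝ) * (x ^ 2 * deriv φ x)) * gammaPDFReal m m x with hu'
  have hderiv : ∀ x ∈ Ioi (0:ℝ), HasDerivAt u (u' x) x := by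
    intro x hx
    have hx0 : (0:ℝ) < x := hx
    have hw : HasDerivAt (fun x : ℝ => x ^ 2 * deriv φ x)
        (2 * x * deriv φ x + x ^ 2 * deriv (deriv φ) x) x := by
      have := (hasDerivAt_pow 2 x).mul (hφ2 x hx)
      exact this.congr_deriv (by push_cast; ring)
    have hq : HasDerivAt (fun y : ℝ => y ^ ((m:ℝ) - 1))
        (((m:ℝ) - 1) * x ^ ((m:ℝ) - 1 - 1)) x :=
      Real.hasDerivAt_rpow_const (Or.inl hx0.ne')
    have he : HasDerivAt (fun y : ℝ => Real.exp (-((m:ℝ) * y)))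
        (Real.exp (-((m:ℝ) * x)) * (-(m:ℝ))) x := by
      have h0 : HasDerivAt (fun y : ℝ => -((m:ℝ) * y)) (-(m:ℝ)) x := by
        exact ((hasDerivAt_id x).const_mul (m:ℝ)).neg.congr_deriv (by ring)
      exact h0.exp
    have hpd : HasDerivAt p (C * ((((m:ℝ) - 1) * x ^ ((m:ℝ) - 1 - 1)) * Real.exp (-((m:ℝ) * x))
        + x ^ ((m:ℝ) - 1) * (Real.exp (-((m:ℝ) * x)) * (-(m:ℝ))))) x := (hq.mul he).const_mul C
    have hprod := hw.mul hpd
    have : HasDerivAt u ((2 * x * deriv φ x + x ^ 2 * deriv (deriv φ) x) * p x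
        + x ^ 2 * deriv φ x * (C * ((((m:ℝ) - 1) * x ^ ((m:ℝ) - 1 - 1)) * Real.exp (-((m:ℝ) * x))
        + x ^ ((m:ℝ) - 1) * (Real.exp (-((m:ℝ) * x)) * (-(m:ℝ)))))) x := hprod
    convert this using 1
    show (x ^ 2 * deriv (deriv φ) x + ((m:ℝ) + 1) * (x * deriv φ x)
      - (m:ℝ) * (x ^ 2 * deriv φ x)) * gammaPDFReal m m x = _
    rw [hpdf x hx0, hp]
    have hxA : x ^ ((m:ℝ) - 1 - 1) = x ^ ((m:ℝ) - 1) / x := by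
      rw [Real.rpow_sub hx0, Real.rpow_one]
    rw [hxA]
    field_simp
    ring
  have hu'int : IntegrableOn u' (Ioi 0) := by
    have hcomb : Integrable (fun x => x ^ 2 * deriv (deriv φ) x + ((m:ℝ) + 1) * (x * deriv φ x)
        - (m:ℝ) * (x ^ 2 * deriv φ x)) ν := (h3.add (ig.const_mul _)).sub (h2.const_mul _)
    exact (my_integrable_gamma_iff _ _ ha ha _).mp hcomb
  have huint : IntegrableOn (fun x => u x / x) (Ioi 0) := by
    have hbase : IntegrableOn (fun x => (x * deriv φ x) * gammaPDFReal m m x) (Ioi 0) :=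
      (my_integrable_gamma_iff _ _ ha ha _).mp ig
    refine hbase.congr_fun (fun x hx => ?_) measurableSet_Ioi
    have hx0 : (0:ℝ) < x := hx
    rw [hu]; dsimp only; rw [hpdf x hx0]
    field_simp
  have hIBP : ∫ x in Ioi (0:ℝ), u' x = 0 := my_integral_deriv_zero u u' hderiv hu'int huint
  have hDid : D = (m:ℝ) * A - ((m:ℝ) + 1) * μI := by
    have e1 : ∫ x in Ioi (0:ℝ), u' x
        = ∫ x, (x ^ 2 * deriv (deriv φ) x + ((m:ℝ) + 1) * (x * deriv φ x)
          - (m:ℝ) * (x ^ 2 * deriv φ x)) ∂ν :=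
      (my_integral_gamma _ _ ha ha _).symm
    rw [e1] at hIBP
    have i1 : Integrable (fun x => x ^ 2 * deriv (deriv φ) x
        + ((m:ℝ) + 1) * (x * deriv φ x)) ν := h3.add (ig.const_mul _)
    have i2 : Integrable (fun x => (m:ℝ) * (x ^ 2 * deriv φ x)) ν := h2.const_mul _
    rw [integral_sub i1 i2, integral_add h3 (ig.const_mul _), integral_const_mul,
      integral_const_mul] at hIBP
    rw [← hμI, ← hA, ← hD] at hIBP
    linarith
  -- Cauchy-Schwarz step
  set K := A - μI with hK
  set t := (m:ℝ) * K with ht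
  set s := t - μI with hs
  have hsq : 0 ≤ ∫ x, (x * deriv φ x - t * x + s) ^ 2 ∂ν :=
    integral_nonneg fun x => sq_nonneg _
  have hexp : ∫ x, (x * deriv φ x - t * x + s) ^ 2 ∂ν
      = (∫ x, (x * deriv φ x) ^ 2 ∂ν) + ((-2 * t) * A + (t ^ 2 * (((m:ℝ) + 1) / m)
        + ((2 * s) * μI + ((-2 * s * t) * 1 + s ^ 2)))) := by
    have e : ∀ x : ℝ, (x * deriv φ x - t * x + s) ^ 2
        = (x * deriv φ x) ^ 2 + ((-2 * t) * (x * (x * deriv φ x)) + (t ^ 2 * x ^ 2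
          + ((2 * s) * (x * deriv φ x) + ((-2 * s * t) * x + s ^ 2)))) := fun x => by ring
    rw [integral_congr_ae (Filter.Eventually.of_forall e)]
    have j5 : Integrable (fun x : ℝ => (-2 * s * t) * x + s ^ 2) ν :=
      (ix.const_mul _).add (integrable_const _)
    have j4 : Integrable (fun x : ℝ => (2 * s) * (x * deriv φ x)
        + ((-2 * s * t) * x + s ^ 2)) ν := (ig.const_mul _).add j5
    have j3 : Integrable (fun x : ℝ => t ^ 2 * x ^ 2 + ((2 * s) * (x * deriv φ x)
        + ((-2 * s * t) * x + s ^ 2))) ν := (ix2.const_mul _).add j4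
    have j2 : Integrable (fun x : ℝ => (-2 * t) * (x * (x * deriv φ x))
        + (t ^ 2 * x ^ 2 + ((2 * s) * (x * deriv φ x)
        + ((-2 * s * t) * x + s ^ 2)))) ν := (ixg.const_mul _).add j3
    rw [integral_add ig2 j2, integral_add (ixg.const_mul _) j3,
      integral_add (ix2.const_mul _) j4, integral_add (ig.const_mul _) j5,
      integral_add (ix.const_mul _) (integrable_const _),
      integral_const_mul, integral_const_mul, integral_const_mul, integral_const_mul,
      integral_const, iX, iX2]
    have exg : ∫ x, x * (x * deriv φ x) ∂ν = A := by
      rw [hA]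
      refine integral_congr_ae (Filter.Eventually.of_forall fun x => ?_)
      ring
    rw [exg, ← hμI]
    simp [measure_univ]
  have hvar : variance (fun x => x * deriv φ x) ν = (∫ x, (x * deriv φ x) ^ 2 ∂ν) - μI ^ 2 := by
    have := variance_eq_sub h1
    simpa [Pi.pow_apply, hμI] using this
  have hCS : (m:ℝ) * K ^ 2 ≤ variance (fun x => x * deriv φ x) ν := by
    rw [hexp] at hsq
    have hdiv : t ^ 2 * (((m:ℝ) + 1) / m) = (m:ℝ) * ((m:ℝ) + 1) * K ^ 2 := by
      rw [ht]; field_simp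
    rw [hdiv] at hsq
    have hiden : (∫ x, (x * deriv φ x) ^ 2 ∂ν) + (-2 * t * A + ((m:ℝ) * ((m:ℝ) + 1) * K ^ 2
        + (2 * s * μI + (-2 * s * t * 1 + s ^ 2))))
        = variance (fun x => x * deriv φ x) ν - (m:ℝ) * K ^ 2 := by
      rw [hvar, hs, ht, hK]; ring
    linarith [hsq, hiden]
  -- final assembly
  have hD2 : 0 < D ^ 2 := by positivity
  rw [le_div_iff₀ hD2, one_mul]
  have hfin : (m:ℝ) * variance (fun x => x * deriv φ x) ν + (2 * (m:ℝ) + 1) * μI ^ 2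
      - 2 * (m:ℝ) * μI * A - D ^ 2
      = (m:ℝ) * (variance (fun x => x * deriv φ x) ν - (m:ℝ) * K ^ 2) := by
    rw [hDid, hK]; ring
  have hnn : 0 ≤ (m:ℝ) * (variance (fun x => x * deriv φ x) ν - (m:ℝ) * K ^ 2) :=
    mul_nonneg ha.le (by linarith)
  linarith [hfin, hnn]
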